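/- arXiv:1706.04003 — 6 statements merged into one kernel-verified Lean document; each statement's English description precedes it below -/
import Mathlib

section
/- Let (F, G) be a dual pair for H, and let U and V be bounded operators on H such that V U* = I_H. Then the mappings U∘F : ω ↦ U(F(ω)) and V∘G : ω ↦ V(G(ω)) are Bessel mappings and (U∘F, V∘G) is a dual pair for H. -/
open MeasureTheory
open scoped ENNReal

noncomputable section

variable {H : Type*} [NormedAddCommGroup H] [InnerProductSpace ℂ H] [CompleteSpace H]
variable {Ω : Type*} [MeasurableSpace Ω]

/-- A map `F : Ω → H` is weakly measurable if `ω ↦ ⟨f, F ω⟩` is measurable for every `f ∈ H`. -/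
def WeaklyMeasurableMap (F : Ω → H) : Prop :=
  ∀ f : H, Measurable fun ω => (inner ℂ f (F ω) : ℂ)

/-- `F` is a Bessel mapping for `H` with respect to `(Ω, μ)` with Bessel bound `B`:
it is weakly measurable and `∫ |⟨f, F ω⟩|² dμ ≤ B ‖f‖²` for all `f`. -/
def IsBesselMapping (μ : Measure Ω) (F : Ω → H) (B : ℝ) : Prop :=
  WeaklyMeasurableMap F ∧ ∀ f : H, ∫ ω, ‖(inner ℂ f (F ω) : ℂ)‖ ^ 2 ∂μ ≤ B * ‖f‖ ^ 2

/-- `F` is a continuous frame for `H` with respect to `(Ω, μ)` with bounds `0 < A ≤ B`. -/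
def IsContinuousFrame (μ : Measure Ω) (F : Ω → H) (A B : ℝ) : Prop :=
  WeaklyMeasurableMap F ∧ 0 < A ∧ A ≤ B ∧
    ∀ f : H, A * ‖f‖ ^ 2 ≤ ∫ ω, ‖(inner ℂ f (F ω) : ℂ)‖ ^ 2 ∂μ ∧
      ∫ ω, ‖(inner ℂ f (F ω) : ℂ)‖ ^ 2 ∂μ ≤ B * ‖f‖ ^ 2


lemma bessel_comp {μ : Measure Ω} (F : Ω → H) (B : ℝ)
    (hF : IsBesselMapping μ F B) (T : H →L[ℂ] H) :
    IsBesselMapping μ (fun ω => T (F ω)) (|B| * ‖T‖ ^ 2) := by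
  constructor
  · intro f
    have : (fun ω => (inner ℂ f (T (F ω)) : ℂ)) =
        fun ω => (inner ℂ (ContinuousLinearMap.adjoint T f) (F ω) : ℂ) := by
      funext ω
      rw [ContinuousLinearMap.adjoint_inner_left]
    rw [this]
    exact hF.1 _
  · intro f
    have h1 : (fun ω => ‖(inner ℂ f (T (F ω)) : ℂ)‖ ^ 2) =
        fun ω => ‖(inner ℂ (ContinuousLinearMap.adjoint T f) (F ω) : ℂ)‖ ^ 2 := by
      funext ω
      rw [ContinuousLinearMap.adjoint_inner_left]
    rw [h1]
    calc ∫ ω, ‖(inner ℂ (ContinuousLinearMap.adjoint T f) (F ω) : ℂ)‖ ^ 2 ∂μ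
        ≤ B * ‖ContinuousLinearMap.adjoint T f‖ ^ 2 := hF.2 _
      _ ≤ |B| * ‖ContinuousLinearMap.adjoint T f‖ ^ 2 := by
          apply mul_le_mul_of_nonneg_right (le_abs_self B) (by positivity)
      _ ≤ |B| * (‖T‖ * ‖f‖) ^ 2 := by
          apply mul_le_mul_of_nonneg_left _ (abs_nonneg B)
          apply pow_le_pow_left₀ (norm_nonneg _)
          calc ‖ContinuousLinearMap.adjoint T f‖
              ≤ ‖ContinuousLinearMap.adjoint T‖ * ‖f‖ := (ContinuousLinearMap.adjoint T).le_opNorm f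
            _ = ‖T‖ * ‖f‖ := by rw [LinearIsometryEquiv.norm_map ContinuousLinearMap.adjoint T]
      _ = |B| * ‖T‖ ^ 2 * ‖f‖ ^ 2 := by ring

/-- if `(F, G)` is a dual pair and `U, V` are bounded operators with
`V U* = I`, then `(U∘F, V∘G)` is a dual pair. -/
theorem statement4 {μ : Measure Ω} (F G : Ω → H) (B_F B_G : ℝ)
    (hF : IsBesselMapping μ F B_F) (hG : IsBesselMapping μ G B_G)
    (hdual : ∀ f g : H, (inner ℂ f g : ℂ) =
      ∫ ω, (inner ℂ f (F ω) : ℂ) * (inner ℂ (G ω) g : ℂ) ∂μ)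
    (U V : H →L[ℂ] H) (hUV : V ∘L ContinuousLinearMap.adjoint U = 1) :
    (∃ B : ℝ, IsBesselMapping μ (fun ω => U (F ω)) B) ∧
    (∃ B : ℝ, IsBesselMapping μ (fun ω => V (G ω)) B) ∧
    ∀ f g : H, (inner ℂ f g : ℂ) =
      ∫ ω, (inner ℂ f (U (F ω)) : ℂ) * (inner ℂ (V (G ω)) g : ℂ) ∂μ := by
  refine ⟨⟨_, bessel_comp F B_F hF U⟩, ⟨_, bessel_comp G B_G hG V⟩, ?_⟩
  intro f g
  have h1 : ∀ ω, (inner ℂ f (U (F ω)) : ℂ) * (inner ℂ (V (G ω)) g : ℂ) =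
      (inner ℂ (ContinuousLinearMap.adjoint U f) (F ω) : ℂ) *
        (inner ℂ (G ω) (ContinuousLinearMap.adjoint V g) : ℂ) := by
    intro ω
    rw [ContinuousLinearMap.adjoint_inner_left, ContinuousLinearMap.adjoint_inner_right]
  simp only [h1]
  rw [← hdual, ContinuousLinearMap.adjoint_inner_right,
    ← ContinuousLinearMap.comp_apply, hUV]
  rfl
end
end

section
/- Let (F, G) be a dual pair for H and let U be a bounded operator on H such that (F, U∘G), where (U∘G)(ω) = U(G(ω)), is also a dual pair for H. Then U = I_H. -/
open MeasureTheory
open scoped ENNReal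

noncomputable section

variable {H : Type*} [NormedAddCommGroup H] [InnerProductSpace ℂ H] [CompleteSpace H]
variable {Ω : Type*} [MeasurableSpace Ω]

/-- if `(F, G)` and `(F, U∘G)` are both dual pairs for a bounded operator
`U`, then `U = I`. -/
theorem statement6 {μ : Measure Ω} (F G : Ω → H) (B_F B_G : ℝ)
    (hF : IsBesselMapping μ F B_F) (hG : IsBesselMapping μ G B_G)
    (hdual : ∀ f g : H, (inner ℂ f g : ℂ) =
      ∫ ω, (inner ℂ f (F ω) : ℂ) * (inner ℂ (G ω) g : ℂ) ∂μ)
    (U : H →L[ℂ] H)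
    (hdualU : ∀ f g : H, (inner ℂ f g : ℂ) =
      ∫ ω, (inner ℂ f (F ω) : ℂ) * (inner ℂ (U (G ω)) g : ℂ) ∂μ) :
    U = 1 := by
  ext f
  apply ext_inner_right ℂ
  intro g
  have h2 := hdual f ((ContinuousLinearMap.adjoint U) g)
  rw [ContinuousLinearMap.adjoint_inner_right] at h2
  simp only [ContinuousLinearMap.adjoint_inner_right] at h2
  simp only [ContinuousLinearMap.one_apply]
  rw [h2, ← hdualU f g]
end
end

section
/- If F and G are approximately dual continuous frames with Bessel bounds B_F and B_G respectively, then both F and G are continuous frames for H with respect to (Ω, μ); more precisely, F is a continuous frame with lower bound B_G⁻¹·(1 − ‖I_H − T_G T_F*‖)² and G is a continuous frame with lower bound B_F⁻¹·(1 − ‖I_H − T_G T_F*‖)². -/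
open MeasureTheory
open scoped ENNReal

noncomputable section

variable {H : Type*} [NormedAddCommGroup H] [InnerProductSpace ℂ H] [CompleteSpace H]
variable {Ω : Type*} [MeasurableSpace Ω]

/-- `T` is the synthesis operator of the Bessel mapping `F`: its adjoint (the analysis
operator) satisfies `(T* f)(ω) = ⟨f, F ω⟩` for `μ`-a.e. `ω`, for every `f ∈ H`. -/
def IsSynthesisOperator (μ : Measure Ω) (F : Ω → H) (T : Lp ℂ 2 μ →L[ℂ] H) : Prop :=
  ∀ f : H, (ContinuousLinearMap.adjoint T f : Ω → ℂ) =ᵐ[μ] fun ω => (inner ℂ f (F ω) : ℂ)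


theorem normsqLp {μ : Measure Ω} (φ : Lp ℂ 2 μ) : ‖φ‖^2 = ∫ ω, ‖φ ω‖^2 ∂μ := by
  rw [@norm_sq_eq_re_inner ℂ, MeasureTheory.L2.inner_def,
    ← integral_re (MeasureTheory.L2.integrable_inner φ φ)]
  refine integral_congr_ae (Filter.Eventually.of_forall fun a => ?_)
  exact inner_self_eq_norm_sq _

theorem synth_norm {μ : Measure Ω} (F : Ω → H) (T : Lp ℂ 2 μ →L[ℂ] H)
    (hT : IsSynthesisOperator μ F T) (f : H) :
    ∫ ω, ‖(inner ℂ f (F ω) : ℂ)‖ ^ 2 ∂μ = ‖ContinuousLinearMap.adjoint T f‖ ^ 2 := by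
  rw [normsqLp]
  exact (integral_congr_ae ((hT f).mono fun ω h => by rw [h])).symm

theorem lower_aux {μ : Measure Ω} (F G : Ω → H) (B_G : ℝ)
    (hG : IsBesselMapping μ G B_G)
    (TF TG : Lp ℂ 2 μ →L[ℂ] H)
    (hTF : IsSynthesisOperator μ F TF) (hTG : IsSynthesisOperator μ G TG)
    (hap : ‖(1 : H →L[ℂ] H) - TG ∘L ContinuousLinearMap.adjoint TF‖ < 1) (f : H) :
    B_G⁻¹ * (1 - ‖(1 : H →L[ℂ] H) - TG ∘L ContinuousLinearMap.adjoint TF‖) ^ 2 * ‖f‖ ^ 2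
      ≤ ∫ ω, ‖(inner ℂ f (F ω) : ℂ)‖ ^ 2 ∂μ := by
  set ε := ‖(1 : H →L[ℂ] H) - TG ∘L ContinuousLinearMap.adjoint TF‖ with hε
  rw [synth_norm F TF hTF f]
  set Y := ‖ContinuousLinearMap.adjoint TF f‖ ^ 2 with hY
  have hYnn : 0 ≤ Y := sq_nonneg _
  rcases le_or_gt B_G 0 with hBG | hBG
  · have : B_G⁻¹ * (1 - ε) ^ 2 * ‖f‖ ^ 2 ≤ 0 := by
      have h1 : B_G⁻¹ ≤ 0 := inv_nonpos.2 hBG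
      have := mul_nonneg (sq_nonneg (1 - ε)) (sq_nonneg ‖f‖)
      nlinarith
    linarith
  · have hTGn : ‖TG‖ ≤ Real.sqrt B_G := by
      rw [← LinearIsometryEquiv.norm_map (ContinuousLinearMap.adjoint) TG]
      refine ContinuousLinearMap.opNorm_le_bound _ (Real.sqrt_nonneg _) fun g => ?_
      have h1 : ‖ContinuousLinearMap.adjoint TG g‖ ^ 2 ≤ B_G * ‖g‖ ^ 2 := by
        rw [← synth_norm G TG hTG g]; exact hG.2 g
      have h2 : (Real.sqrt B_G * ‖g‖) ^ 2 = B_G * ‖g‖ ^ 2 := by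
        rw [mul_pow, Real.sq_sqrt hBG.le]
      nlinarith [norm_nonneg (ContinuousLinearMap.adjoint TG g), norm_nonneg g,
        Real.sqrt_nonneg B_G, mul_nonneg (Real.sqrt_nonneg B_G) (norm_nonneg g)]
    have key : (1 - ε) * ‖f‖ ≤ Real.sqrt B_G * ‖ContinuousLinearMap.adjoint TF f‖ := by
      have h1 : ‖f - TG (ContinuousLinearMap.adjoint TF f)‖ ≤ ε * ‖f‖ := by
        have := ((1 : H →L[ℂ] H) - TG ∘L ContinuousLinearMap.adjoint TF).le_opNorm f
        simpa using this
      have h2 : ‖f‖ - ‖TG (ContinuousLinearMap.adjoint TF f)‖ ≤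
          ‖f - TG (ContinuousLinearMap.adjoint TF f)‖ := norm_sub_norm_le _ _
      have h3 : ‖TG (ContinuousLinearMap.adjoint TF f)‖ ≤
          ‖TG‖ * ‖ContinuousLinearMap.adjoint TF f‖ := TG.le_opNorm _
      have h4 : ‖TG‖ * ‖ContinuousLinearMap.adjoint TF f‖ ≤
          Real.sqrt B_G * ‖ContinuousLinearMap.adjoint TF f‖ :=
        mul_le_mul_of_nonneg_right hTGn (norm_nonneg _)
      nlinarith
    have hεnn : (0:ℝ) ≤ ε := norm_nonneg _
    have hε1 : 0 ≤ 1 - ε := by linarith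
    have keysq : (1 - ε) ^ 2 * ‖f‖ ^ 2 ≤ B_G * Y := by
      have h5 := mul_le_mul key key (mul_nonneg hε1 (norm_nonneg f))
        (mul_nonneg (Real.sqrt_nonneg _) (norm_nonneg _))
      have h6 : (Real.sqrt B_G * ‖ContinuousLinearMap.adjoint TF f‖) *
          (Real.sqrt B_G * ‖ContinuousLinearMap.adjoint TF f‖) = B_G * Y := by
        rw [hY]; ring_nf; rw [Real.sq_sqrt hBG.le]; ring
      nlinarith
    calc B_G⁻¹ * (1 - ε) ^ 2 * ‖f‖ ^ 2 = B_G⁻¹ * ((1 - ε) ^ 2 * ‖f‖ ^ 2) := by ring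
      _ ≤ B_G⁻¹ * (B_G * Y) := mul_le_mul_of_nonneg_left keysq (inv_nonneg.2 hBG.le)
      _ = Y := by rw [← mul_assoc, inv_mul_cancel₀ hBG.ne', one_mul]

/-- if `F` and `G` are approximately dual continuous frames with Bessel
bounds `B_F`, `B_G`, then `F` is a continuous frame with lower bound
`B_G⁻¹ (1 - ‖I - T_G T_F*‖)²` and `G` with lower bound `B_F⁻¹ (1 - ‖I - T_G T_F*‖)²`. -/
theorem statement10 {μ : Measure Ω} (F G : Ω → H) (B_F B_G : ℝ)
    (hF : IsBesselMapping μ F B_F) (hG : IsBesselMapping μ G B_G)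
    (TF TG : Lp ℂ 2 μ →L[ℂ] H)
    (hTF : IsSynthesisOperator μ F TF) (hTG : IsSynthesisOperator μ G TG)
    (happrox : ‖(1 : H →L[ℂ] H) - TG ∘L ContinuousLinearMap.adjoint TF‖ < 1) :
    (∀ f : H, B_G⁻¹ * (1 - ‖(1 : H →L[ℂ] H) - TG ∘L ContinuousLinearMap.adjoint TF‖) ^ 2
        * ‖f‖ ^ 2 ≤ ∫ ω, ‖(inner ℂ f (F ω) : ℂ)‖ ^ 2 ∂μ) ∧
    (∀ f : H, B_F⁻¹ * (1 - ‖(1 : H →L[ℂ] H) - TG ∘L ContinuousLinearMap.adjoint TF‖) ^ 2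
        * ‖f‖ ^ 2 ≤ ∫ ω, ‖(inner ℂ f (G ω) : ℂ)‖ ^ 2 ∂μ) := by
  have hadj : ContinuousLinearMap.adjoint
      ((1 : H →L[ℂ] H) - TG ∘L ContinuousLinearMap.adjoint TF)
      = (1 : H →L[ℂ] H) - TF ∘L ContinuousLinearMap.adjoint TG := by
    rw [map_sub, ContinuousLinearMap.adjoint_comp, ContinuousLinearMap.adjoint_adjoint,
      ContinuousLinearMap.one_def, ContinuousLinearMap.adjoint_id]
  have hnorm : ‖(1 : H →L[ℂ] H) - TF ∘L ContinuousLinearMap.adjoint TG‖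
      = ‖(1 : H →L[ℂ] H) - TG ∘L ContinuousLinearMap.adjoint TF‖ := by
    rw [← hadj, LinearIsometryEquiv.norm_map]
  refine ⟨fun f => lower_aux F G B_G hG TF TG hTF hTG happrox f, fun f => ?_⟩
  have := lower_aux G F B_F hF TG TF hTG hTF (by rw [hnorm]; exact happrox) f
  rwa [hnorm] at this
end
end

section
/- Let F be a continuous frame for H with frame operator S_F (which is invertible, with positive invertible square root S_F^{1/2}). A Bessel mapping G : Ω → H and F are approximately dual continuous frames if and only if there exist a bounded operator D on H with ‖I_H − S_F^{1/2} D‖ < 1 and a Bessel mapping K : Ω → H with T_F T_K* = 0 such that G(ω) = D* S_F^{−1/2} F(ω) + K(ω) for all ω ∈ Ω. -/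
open ContinuousLinearMap
set_option maxHeartbeats 1000000


open MeasureTheory
open scoped ENNReal

noncomputable section

variable {H : Type*} [NormedAddCommGroup H] [InnerProductSpace ℂ H] [CompleteSpace H]
variable {Ω : Type*} [MeasurableSpace Ω]

lemma lp2_integral_norm_sq {μ : Measure Ω} (ψ : Lp ℂ 2 μ) :
    ∫ ω, ‖(ψ : Ω → ℂ) ω‖ ^ 2 ∂μ = ‖ψ‖ ^ 2 := by
  have h : (inner ℂ ψ ψ : ℂ) = ∫ ω, (inner ℂ ((ψ : Ω → ℂ) ω) ((ψ : Ω → ℂ) ω) : ℂ) ∂μ :=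
    MeasureTheory.L2.inner_def ψ ψ
  have hint : Integrable (fun ω => (inner ℂ ((ψ : Ω → ℂ) ω) ((ψ : Ω → ℂ) ω) : ℂ)) μ :=
    MeasureTheory.L2.integrable_inner (𝕜 := ℂ) ψ ψ
  have hre := integral_re hint
  calc ∫ ω, ‖(ψ : Ω → ℂ) ω‖ ^ 2 ∂μ
      = ∫ ω, RCLike.re (inner ℂ ((ψ : Ω → ℂ) ω) ((ψ : Ω → ℂ) ω) : ℂ) ∂μ := by
        refine integral_congr_ae (Filter.Eventually.of_forall fun ω => ?_)
        exact (inner_self_eq_norm_sq _).symm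
    _ = RCLike.re (inner ℂ ψ ψ : ℂ) := by rw [hre, h]
    _ = ‖ψ‖ ^ 2 := inner_self_eq_norm_sq ψ

lemma bessel_of_synthesis {μ : Measure Ω} {K : Ω → H} (hKm : WeaklyMeasurableMap K)
    {TK : Lp ℂ 2 μ →L[ℂ] H} (hsyn : IsSynthesisOperator μ K TK) :
    IsBesselMapping μ K (‖ContinuousLinearMap.adjoint TK‖ ^ 2) := by
  refine ⟨hKm, fun f => ?_⟩
  set TKa := ContinuousLinearMap.adjoint TK with hTKa
  calc ∫ ω, ‖(inner ℂ f (K ω) : ℂ)‖ ^ 2 ∂μ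
      = ∫ ω, ‖(TKa f : Ω → ℂ) ω‖ ^ 2 ∂μ := by
        refine integral_congr_ae ?_
        filter_upwards [hsyn f] with ω hω
        rw [hω]
    _ = ‖TKa f‖ ^ 2 := lp2_integral_norm_sq _
    _ ≤ (‖TKa‖ * ‖f‖) ^ 2 := pow_le_pow_left₀ (norm_nonneg _) (TKa.le_opNorm f) 2
    _ = ‖TKa‖ ^ 2 * ‖f‖ ^ 2 := by ring

lemma adjoint_one' : ContinuousLinearMap.adjoint (1 : H →L[ℂ] H) = 1 := by
  rw [one_def, adjoint_id]


/-- for a continuous frame `F` with invertible frame operator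
`S_F = R ∘ R` (where `R = S_F^{1/2}` is positive and invertible with inverse `Rinv`),
a Bessel mapping `G` and `F` are approximately dual iff
`G = D* S_F^{-1/2} F + K` for some bounded `D` with `‖I - S_F^{1/2} D‖ < 1` and some
Bessel mapping `K` with `T_F T_K* = 0`. -/
theorem statement15 {μ : Measure Ω} (F G : Ω → H) (A_F B_F B_G : ℝ)
    (hF : IsContinuousFrame μ F A_F B_F) (hG : IsBesselMapping μ G B_G)
    (TF TG : Lp ℂ 2 μ →L[ℂ] H)
    (hTF : IsSynthesisOperator μ F TF) (hTG : IsSynthesisOperator μ G TG)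
    (R Rinv : H →L[ℂ] H) (hRpos : R.IsPositive)
    (hRsq : R ∘L R = TF ∘L ContinuousLinearMap.adjoint TF)
    (hRinv1 : R ∘L Rinv = 1) (hRinv2 : Rinv ∘L R = 1) :
    ‖(1 : H →L[ℂ] H) - TG ∘L ContinuousLinearMap.adjoint TF‖ < 1 ↔
      ∃ D : H →L[ℂ] H, ‖(1 : H →L[ℂ] H) - R ∘L D‖ < 1 ∧
        ∃ (K : Ω → H) (B_K : ℝ) (TK : Lp ℂ 2 μ →L[ℂ] H),
          IsBesselMapping μ K B_K ∧ IsSynthesisOperator μ K TK ∧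
          TF ∘L ContinuousLinearMap.adjoint TK = 0 ∧
          ∀ ω : Ω, G ω = ContinuousLinearMap.adjoint D (Rinv (F ω)) + K ω := by
  have hRadj : adjoint R = R := hRpos.1.clm_adjoint_eq
  have hRinvadj : adjoint Rinv = Rinv := by
    have h1 : adjoint Rinv ∘L R = 1 := by
      rw [← hRadj, ← adjoint_comp, hRinv1, adjoint_one']
    calc adjoint Rinv = adjoint Rinv ∘L (R ∘L Rinv) := by rw [hRinv1]; rfl
      _ = (adjoint Rinv ∘L R) ∘L Rinv := by rw [comp_assoc]
      _ = Rinv := by rw [h1, one_def, id_comp]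
  constructor
  · intro h
    set D : H →L[ℂ] H := Rinv ∘L (TF ∘L adjoint TG) with hD
    set M : H →L[ℂ] H := adjoint D ∘L Rinv with hM
    have hMadj : adjoint M = Rinv ∘L D := by
      rw [hM, adjoint_comp, adjoint_adjoint, hRinvadj]
    have hRD : R ∘L D = TF ∘L adjoint TG := by
      rw [hD, ← comp_assoc, hRinv1, one_def, id_comp]
    set TK : Lp ℂ 2 μ →L[ℂ] H := TG - M ∘L TF with hTKdef
    have hsyn : IsSynthesisOperator μ (fun ω => G ω - M (F ω)) TK := by
      intro f
      have h1 : adjoint TK f = adjoint TG f - adjoint TF (adjoint M f) := by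
        rw [hTKdef, map_sub, adjoint_comp]; rfl
      rw [h1]
      filter_upwards [Lp.coeFn_sub (adjoint TG f) (adjoint TF (adjoint M f)),
        hTG f, hTF (adjoint M f)] with ω h2 h3 h4
      simp only [h2, Pi.sub_apply, h3, h4, inner_sub_right, adjoint_inner_left]
    have hKm : WeaklyMeasurableMap (fun ω => G ω - M (F ω)) := by
      intro f
      have heq : (fun ω => (inner ℂ f (G ω - M (F ω)) : ℂ))
          = fun ω => (inner ℂ f (G ω) : ℂ) - (inner ℂ (adjoint M f) (F ω) : ℂ) := by
        funext ω; rw [inner_sub_right, adjoint_inner_left]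
      rw [heq]
      exact (hG.1 f).sub (hF.1 (adjoint M f))
    refine ⟨D, ?_, fun ω => G ω - M (F ω), _, TK,
      bessel_of_synthesis hKm hsyn, hsyn, ?_, fun ω => ?_⟩
    · rw [hRD]
      have heq : (1 : H →L[ℂ] H) - TF ∘L adjoint TG
          = adjoint ((1 : H →L[ℂ] H) - TG ∘L adjoint TF) := by
        rw [map_sub, adjoint_comp, adjoint_adjoint, adjoint_one']
      rw [heq, adjoint.norm_map]
      exact h
    · have heq : adjoint TK = adjoint TG - adjoint TF ∘L adjoint M := by
        rw [hTKdef, map_sub, adjoint_comp]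
      rw [heq, comp_sub, ← comp_assoc, ← hRsq, hMadj, ← comp_assoc]
      have h3 : (R ∘L R) ∘L Rinv = R := by rw [comp_assoc, hRinv1, one_def, comp_id]
      rw [h3, hRD, sub_self]
    · have : ContinuousLinearMap.adjoint D (Rinv (F ω)) = M (F ω) := rfl
      show G ω = M (F ω) + (G ω - M (F ω))
      rw [add_sub_cancel]
  · rintro ⟨D, hDnorm, K, B_K, TK, hK, hTK, hzero, hGeq⟩
    set M : H →L[ℂ] H := adjoint D ∘L Rinv with hM
    have hMadj : adjoint M = Rinv ∘L D := by
      rw [hM, adjoint_comp, adjoint_adjoint, hRinvadj]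
    have hTGeq : TG = M ∘L TF + TK := by
      have hadj : adjoint TG = adjoint (M ∘L TF + TK) := by
        ext f
        have h1 : adjoint (M ∘L TF + TK) f = adjoint TF (adjoint M f) + adjoint TK f := by
          rw [map_add, adjoint_comp]; rfl
        rw [h1]
        filter_upwards [hTG f, Lp.coeFn_add (adjoint TF (adjoint M f)) (adjoint TK f),
          hTF (adjoint M f), hTK f] with ω h2 h3 h4 h5
        rw [h2, h3, Pi.add_apply, h4, h5, hGeq ω, inner_add_right, adjoint_inner_left]
        rfl
      have h2 := congrArg (fun X => adjoint X) hadj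
      simpa [adjoint_adjoint] using h2
    have hTKTF : TK ∘L adjoint TF = 0 := by
      have h2 := congrArg (fun X => adjoint X) hzero
      simpa [adjoint_comp, adjoint_adjoint] using h2
    have hcomp : TG ∘L adjoint TF = adjoint D ∘L R := by
      rw [hTGeq, add_comp, hTKTF, add_zero, comp_assoc, ← hRsq, hM,
        comp_assoc, ← comp_assoc Rinv R R, hRinv2, one_def, id_comp]
    rw [hcomp]
    have heq : (1 : H →L[ℂ] H) - adjoint D ∘L R
        = adjoint ((1 : H →L[ℂ] H) - R ∘L D) := by
      rw [map_sub, adjoint_comp, adjoint_one', hRadj]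
    rw [heq, adjoint.norm_map]
    exact hDnorm
end
end

section
/- Let F be a Parseval continuous frame for H (i.e. a continuous frame with bounds A = B = 1) and let G be a Bessel mapping. Assume there exist constants λ, γ ≥ 0 with λ + γ < 1 such that ‖T_F φ − T_G φ‖ ≤ λ‖T_F φ‖ + γ‖φ‖_{L²} for all φ ∈ L²(Ω, μ). Then ‖I_H − T_G T_F*‖ < 1, i.e. F and G are approximately dual continuous frames. -/
open MeasureTheory
open scoped ENNReal

noncomputable section

variable {H : Type*} [NormedAddCommGroup H] [InnerProductSpace ℂ H] [CompleteSpace H]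
variable {Ω : Type*} [MeasurableSpace Ω]

/-- if `F` is a Parseval continuous frame, `G` a Bessel mapping, and
`‖T_F φ - T_G φ‖ ≤ λ ‖T_F φ‖ + γ ‖φ‖₂` for all `φ ∈ L²` with `λ + γ < 1`, then
`‖I - T_G T_F*‖ < 1`, i.e. `F` and `G` are approximately dual continuous frames. -/
theorem statement17 {μ : Measure Ω} (F G : Ω → H) (B_G : ℝ)
    (hFmeas : WeaklyMeasurableMap F)
    (hFParseval : ∀ f : H, ∫ ω, ‖(inner ℂ f (F ω) : ℂ)‖ ^ 2 ∂μ = ‖f‖ ^ 2)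
    (hG : IsBesselMapping μ G B_G)
    (TF TG : Lp ℂ 2 μ →L[ℂ] H)
    (hTF : IsSynthesisOperator μ F TF) (hTG : IsSynthesisOperator μ G TG)
    (lam gam : ℝ) (hlam : 0 ≤ lam) (hgam : 0 ≤ gam) (hsum : lam + gam < 1)
    (hpert : ∀ φ : Lp ℂ 2 μ, ‖TF φ - TG φ‖ ≤ lam * ‖TF φ‖ + gam * ‖φ‖) :
    ‖(1 : H →L[ℂ] H) - TG ∘L ContinuousLinearMap.adjoint TF‖ < 1 := by
  set S := ContinuousLinearMap.adjoint TF with hS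
  -- analysis operator is isometric
  have hiso : ∀ f : H, ‖S f‖ ^ 2 = ‖f‖ ^ 2 := by
    intro f
    have h1 : (inner ℂ (S f) (S f) : ℂ) = ∫ ω, (inner ℂ ((S f : Ω → ℂ) ω) ((S f : Ω → ℂ) ω) : ℂ) ∂μ :=
      MeasureTheory.L2.inner_def (S f) (S f)
    have hint : Integrable (fun ω => (inner ℂ ((S f : Ω → ℂ) ω) ((S f : Ω → ℂ) ω) : ℂ)) μ :=
      MeasureTheory.L2.integrable_inner (𝕜 := ℂ) (S f) (S f)
    have h2 : ‖S f‖ ^ 2 = RCLike.re (inner ℂ (S f) (S f) : ℂ) := by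
      rw [inner_self_eq_norm_sq]
    have h3 : RCLike.re (inner ℂ (S f) (S f) : ℂ)
        = ∫ ω, RCLike.re ((inner ℂ ((S f : Ω → ℂ) ω) ((S f : Ω → ℂ) ω) : ℂ)) ∂μ := by
      rw [h1, integral_re hint]
    have h4 : ∫ ω, RCLike.re ((inner ℂ ((S f : Ω → ℂ) ω) ((S f : Ω → ℂ) ω) : ℂ)) ∂μ
        = ∫ ω, ‖(inner ℂ f (F ω) : ℂ)‖ ^ 2 ∂μ := by
      apply integral_congr_ae
      filter_upwards [hTF f] with ω hω
      rw [hω]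
      exact inner_self_eq_norm_sq _
    rw [h2, h3, h4, hFParseval]
  -- TF ∘ S = 1
  have hTT : TF ∘L S = 1 := by
    have hz : (TF ∘L S - 1 : H →L[ℂ] H) = 0 := by
      have := (inner_map_self_eq_zero ((TF ∘L S - 1 : H →L[ℂ] H) : H →ₗ[ℂ] H)).mp ?_
      · ext x
        have := congrArg (fun (T : H →ₗ[ℂ] H) => T x) this
        simpa using this
      · intro x
        simp only [ContinuousLinearMap.coe_coe, ContinuousLinearMap.sub_apply,
          ContinuousLinearMap.comp_apply, ContinuousLinearMap.one_apply, inner_sub_left]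
        have h1 : (inner ℂ (TF (S x)) x : ℂ) = (inner ℂ (S x) (S x) : ℂ) := by
          rw [hS, ← ContinuousLinearMap.adjoint_inner_right]
        rw [h1, inner_self_eq_norm_sq_to_K, inner_self_eq_norm_sq_to_K]
        rw [sub_eq_zero]
        exact_mod_cast hiso x
    have := sub_eq_zero.mp hz
    exact this
  have hbound : ∀ f : H, ‖((1 : H →L[ℂ] H) - TG ∘L S) f‖ ≤ (lam + gam) * ‖f‖ := by
    intro f
    have hf : TF (S f) = f := by
      have := congrArg (fun (T : H →L[ℂ] H) => T f) hTT
      simpa using this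
    have := hpert (S f)
    rw [hf] at this
    have hiso' : ‖S f‖ = ‖f‖ := by
      have := hiso f
      nlinarith [norm_nonneg (S f), norm_nonneg f]
    rw [hiso'] at this
    calc ‖((1 : H →L[ℂ] H) - TG ∘L S) f‖ = ‖f - TG (S f)‖ := by simp
      _ ≤ lam * ‖f‖ + gam * ‖f‖ := this
      _ = (lam + gam) * ‖f‖ := by ring
  calc ‖(1 : H →L[ℂ] H) - TG ∘L S‖ ≤ lam + gam :=
        ContinuousLinearMap.opNorm_le_bound _ (by linarith) hbound
    _ < 1 := hsum
end
end

section
/- Let F, G and K be Bessel mappings, with B_G a Bessel bound of G, and let λ > 0 satisfy λ·B_G < 1. Assume ∫_Ω |⟨f, F(ω) − K(ω)⟩|² dμ(ω) ≤ λ‖f‖² for all f ∈ H and that (F, G) is a dual pair for H (T_G T_F* = I_H). Then ‖I_H − T_G T_K*‖ ≤ √(λ·B_G) < 1, i.e. G and K are approximately dual continuous frames. -/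
open MeasureTheory
open scoped ENNReal

noncomputable section

variable {H : Type*} [NormedAddCommGroup H] [InnerProductSpace ℂ H] [CompleteSpace H]
variable {Ω : Type*} [MeasurableSpace Ω]

lemma l2_norm_sq_eq_integral {Ω : Type*} [MeasurableSpace Ω] {μ : Measure Ω}
    (φ : Lp ℂ 2 μ) : ‖φ‖ ^ 2 = ∫ ω, ‖φ ω‖ ^ 2 ∂μ := by
  have h1 : ‖φ‖ ^ 2 = RCLike.re (inner (𝕜 := ℂ) φ φ) := norm_sq_eq_re_inner φ
  rw [h1, MeasureTheory.L2.inner_def,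
    ← integral_re (MeasureTheory.L2.integrable_inner (𝕜 := ℂ) φ φ)]
  congr 1
  ext ω
  rw [← norm_sq_eq_re_inner (𝕜 := ℂ)]

set_option maxHeartbeats 1000000 in
/-- if `F, G, K` are Bessel mappings with `B_G` a Bessel bound of `G`,
`λ B_G < 1`, `∫ |⟨f, F ω - K ω⟩|² dμ ≤ λ ‖f‖²` for all `f`, and `(F, G)` is a dual
pair (`T_G T_F* = I`), then `‖I - T_G T_K*‖ ≤ √(λ B_G) < 1`, i.e. `G` and `K` are
approximately dual continuous frames. -/
theorem statement18 {μ : Measure Ω} (F G K : Ω → H) (B_F B_G B_K : ℝ)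
    (hF : IsBesselMapping μ F B_F) (hG : IsBesselMapping μ G B_G)
    (hK : IsBesselMapping μ K B_K)
    (TF TG TK : Lp ℂ 2 μ →L[ℂ] H)
    (hTF : IsSynthesisOperator μ F TF) (hTG : IsSynthesisOperator μ G TG)
    (hTK : IsSynthesisOperator μ K TK)
    (lam : ℝ) (hlam : 0 < lam) (hlamB : lam * B_G < 1)
    (hpert : ∀ f : H, ∫ ω, ‖(inner ℂ f (F ω - K ω) : ℂ)‖ ^ 2 ∂μ ≤ lam * ‖f‖ ^ 2)
    (hdual : TG ∘L ContinuousLinearMap.adjoint TF = 1) :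
    ‖(1 : H →L[ℂ] H) - TG ∘L ContinuousLinearMap.adjoint TK‖ ≤ Real.sqrt (lam * B_G) ∧
      Real.sqrt (lam * B_G) < 1 := by
  have hsq1 : Real.sqrt (lam * B_G) < 1 := by
    rw [Real.sqrt_lt' one_pos]; simpa using hlamB
  refine ⟨?_, hsq1⟩
  set A := ContinuousLinearMap.adjoint TF - ContinuousLinearMap.adjoint TK with hA
  -- pointwise a.e. identification of A f
  have hAnorm : ∀ f : H, ‖A f‖ ^ 2 ≤ lam * ‖f‖ ^ 2 := by
    intro f
    have hae : (A f : Ω → ℂ) =ᵐ[μ] fun ω => (inner ℂ f (F ω - K ω) : ℂ) := by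
      have h1 := hTF f
      have h2 := hTK f
      have h3 : (A f : Ω → ℂ) =ᵐ[μ]
          (ContinuousLinearMap.adjoint TF f : Ω → ℂ) -
            (ContinuousLinearMap.adjoint TK f : Ω → ℂ) := by
        simpa [hA] using MeasureTheory.Lp.coeFn_sub
          (ContinuousLinearMap.adjoint TF f) (ContinuousLinearMap.adjoint TK f)
      filter_upwards [h1, h2, h3] with ω e1 e2 e3
      simp [e3, e1, e2, Pi.sub_apply, inner_sub_right]
    have : ‖A f‖ ^ 2 = ∫ ω, ‖(inner ℂ f (F ω - K ω) : ℂ)‖ ^ 2 ∂μ := by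
      rw [l2_norm_sq_eq_integral (A f)]
      exact integral_congr_ae (hae.mono fun ω h => by simp only [h])
    rw [this]; exact hpert f
  -- operator identity
  have hop : (1 : H →L[ℂ] H) - TG ∘L ContinuousLinearMap.adjoint TK = TG ∘L A := by
    rw [← hdual, hA, ContinuousLinearMap.comp_sub]
  rw [hop]
  by_cases hBG : 0 ≤ B_G
  · -- norm of TG
    have hTGadj : ∀ f : H, ‖ContinuousLinearMap.adjoint TG f‖ ≤ Real.sqrt B_G * ‖f‖ := by
      intro f
      have h1 : ‖ContinuousLinearMap.adjoint TG f‖ ^ 2 ≤ B_G * ‖f‖ ^ 2 := by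
        have hae := hTG f
        have : ‖ContinuousLinearMap.adjoint TG f‖ ^ 2
            = ∫ ω, ‖(inner ℂ f (G ω) : ℂ)‖ ^ 2 ∂μ := by
          rw [l2_norm_sq_eq_integral]
          exact integral_congr_ae (hae.mono fun ω h => by simp only [h])
        rw [this]; exact hG.2 f
      have h2 : (Real.sqrt B_G * ‖f‖) ^ 2 = B_G * ‖f‖ ^ 2 := by
        rw [mul_pow, Real.sq_sqrt hBG]
      nlinarith [norm_nonneg (ContinuousLinearMap.adjoint TG f),
        mul_nonneg (Real.sqrt_nonneg B_G) (norm_nonneg f)]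
    have hTGnorm : ‖TG‖ ≤ Real.sqrt B_G := by
      have heq : ‖TG‖ = ‖ContinuousLinearMap.adjoint TG‖ :=
        (LinearIsometryEquiv.norm_map ContinuousLinearMap.adjoint TG).symm
      rw [heq]
      exact ContinuousLinearMap.opNorm_le_bound _ (Real.sqrt_nonneg _) hTGadj
    refine ContinuousLinearMap.opNorm_le_bound _ (Real.sqrt_nonneg _) fun f => ?_
    have hAf : ‖A f‖ ≤ Real.sqrt lam * ‖f‖ := by
      have h2 : (Real.sqrt lam * ‖f‖) ^ 2 = lam * ‖f‖ ^ 2 := by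
        rw [mul_pow, Real.sq_sqrt hlam.le]
      nlinarith [hAnorm f, norm_nonneg (A f),
        mul_nonneg (Real.sqrt_nonneg lam) (norm_nonneg f)]
    calc ‖(TG ∘L A) f‖ = ‖TG (A f)‖ := rfl
      _ ≤ ‖TG‖ * ‖A f‖ := TG.le_opNorm _
      _ ≤ Real.sqrt B_G * (Real.sqrt lam * ‖f‖) := by
          apply mul_le_mul hTGnorm hAf (norm_nonneg _) (Real.sqrt_nonneg _)
      _ = Real.sqrt (lam * B_G) * ‖f‖ := by
          rw [Real.sqrt_mul hlam.le]; ring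
  · -- B_G < 0 : H is trivial
    push_neg at hBG
    have htriv : ∀ f : H, f = 0 := by
      intro f
      by_contra hf
      have hf' : 0 < ‖f‖ := norm_pos_iff.mpr hf
      have hpos : 0 < ‖f‖ ^ 2 := by positivity
      have h1 : (0:ℝ) ≤ ∫ ω, ‖(inner ℂ f (G ω) : ℂ)‖ ^ 2 ∂μ :=
        integral_nonneg fun ω => by positivity
      have h2 := hG.2 f
      nlinarith
    refine ContinuousLinearMap.opNorm_le_bound _ (Real.sqrt_nonneg _) fun f => ?_
    rw [htriv f]
    simp [Real.sqrt_nonneg]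
end
end
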